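/- Let G be a pro-2-group generated by involutions with H^2(G, Q_2/Z_2) = 0. Then the connecting map H^1(G, Q_2/Z_2) → H^2(G, Z/2Z) arising from the exact sequence 0 → Z/2Z → Q_2/Z_2 → Q_2/Z_2 → 0 (multiplication by 2) is an isomorphism, and the multiplication-by-2 map on H^1(G, Q_2/Z_2) is zero. -/

import Mathlib

/-! Statement 2: the connecting map H¹(G,ℚ₂/ℤ₂) → H²(G,ℤ/2ℤ) for the sequence
0 → ℤ/2ℤ → ℚ₂/ℤ₂ →(×2) ℚ₂/ℤ₂ → 0 is an isomorphism, and multiplication by 2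
is zero on H¹(G,ℚ₂/ℤ₂), for a pro-2-group G generated by involutions with
H²(G,ℚ₂/ℤ₂) = 0. -/

namespace GCoh

variable {G : Type*} [Group G] [TopologicalSpace G]
variable {A : Type*} [AddCommGroup A] [TopologicalSpace A]

/-- Inhomogeneous differential for continuous cochains, trivial action. -/
def d (n : ℕ) (f : (Fin n → G) → A) : (Fin (n+1) → G) → A :=
  fun g =>
    f (fun i => g i.succ)
      + ∑ i : Fin n, ((-1 : ℤ) ^ ((i : ℕ) + 1)) •
          f (fun j => if (j : ℕ) < (i : ℕ) then g j.castSucc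
                      else if (j : ℕ) = (i : ℕ) then g i.castSucc * g i.succ
                      else g j.succ)
      + ((-1 : ℤ) ^ (n + 1)) • f (fun i => g i.castSucc)

/-- A continuous `n`-cocycle (trivial action). -/
def IsCocycle (n : ℕ) (f : (Fin n → G) → A) : Prop :=
  Continuous f ∧ d n f = 0

/-- A continuous `n`-coboundary (trivial action). -/
def IsCoboundary : (n : ℕ) → ((Fin n → G) → A) → Prop
  | 0, f => f = 0
  | (n+1), f => ∃ h : (Fin n → G) → A, Continuous h ∧ d n h = f

/-- Pullback of cochains along a homomorphism. -/
def pull {G' : Type*} [Group G'] (φ : G' →* G) (n : ℕ) (f : (Fin n → G) → A) :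
    (Fin n → G') → A :=
  fun v => f (fun i => φ (v i))

/-- A pro-`p` group: a profinite group all of whose finite quotients are `p`-groups. -/
def IsProP (p : ℕ) (G : Type*) [Group G] [TopologicalSpace G] : Prop :=
  CompactSpace G ∧ T2Space G ∧ TotallyDisconnectedSpace G ∧ IsTopologicalGroup G ∧
    ∀ U : Subgroup G, U.Normal → IsOpen (U : Set G) → ∃ n : ℕ, Nat.card (G ⧸ U) = p ^ n

/-- `G` is topologically generated by its involutions. -/
def GeneratedByInvolutions (G : Type*) [Group G] [TopologicalSpace G] : Prop :=
  closure ((Subgroup.closure {g : G | g ^ 2 = 1} : Subgroup G) : Set G) = Set.univ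

end GCoh

open GCoh

/-- The discrete module `ℚ₂/ℤ₂`. -/
noncomputable abbrev Q2Z2 := ℚ_[2] ⧸ (PadicInt.Coe.ringHom (p := 2)).toAddMonoidHom.range

/-- The class of `1/2`, a generator of the `2`-torsion of `ℚ₂/ℤ₂`. -/
noncomputable def halfClass : Q2Z2 := QuotientAddGroup.mk ((2 : ℚ_[2])⁻¹)

/-- The inclusion `ℤ/2ℤ ↪ ℚ₂/ℤ₂` onto the 2-torsion subgroup. -/
noncomputable def iota : ZMod 2 →+ Q2Z2 :=
  ZMod.lift 2 ⟨(zmultiplesHom Q2Z2) halfClass, by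
    show (2 : ℤ) • halfClass = 0
    rw [halfClass, ← QuotientAddGroup.mk_zsmul, QuotientAddGroup.eq_zero_iff]
    refine ⟨(1 : ℤ_[2]), ?_⟩
    show ((1 : ℤ_[2]) : ℚ_[2]) = (2 : ℤ) • ((2 : ℚ_[2])⁻¹)
    rw [zsmul_eq_mul]; push_cast; norm_num⟩


namespace GCoh

variable {G : Type*} [Group G] [TopologicalSpace G]
variable {A : Type*} [AddCommGroup A] [TopologicalSpace A]

set_option linter.unusedSectionVars false

theorem d1_apply' (f : (Fin 1 → G) → A) (g : Fin 2 → G) :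
    d 1 f g = f (fun _ => g 1) - f (fun _ => g 0 * g 1) + f (fun _ => g 0) := by
  simp only [d, Fin.sum_univ_one]
  norm_num
  rw [show (fun i : Fin 1 => g i.succ) = (fun _ => g 1) from funext fun i => by fin_cases i; rfl,
    show (fun i : Fin 1 => g i.castSucc) = (fun _ => g 0) from funext fun i => by fin_cases i; rfl]
  abel

theorem d1_xy (f : (Fin 1 → G) → A) (x y : G) :
    d 1 f ![x, y] = f (fun _ => y) - f (fun _ => x * y) + f (fun _ => x) := by
  rw [d1_apply']
  simp

theorem d_hom' {B : Type*} [AddCommGroup B] [TopologicalSpace B] (ι : A →+ B) (n : ℕ)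
    (f : (Fin n → G) → A) : d n (fun v => ι (f v)) = fun v => ι (d n f v) := by
  funext g
  simp [d, map_add, map_zsmul, map_sum]

theorem d_smul' (k : ℤ) (n : ℕ) (f : (Fin n → G) → A) :
    d n (fun v => k • f v) = fun v => k • d n f v := by
  funext g
  simp only [d, smul_add, Finset.smul_sum, smul_comm k]

theorem d_zero' (n : ℕ) : d n (0 : (Fin n → G) → A) = 0 := by
  funext g
  simp [d]

theorem cocycle_add (f : (Fin 1 → G) → A) (hf : d 1 f = 0) (x y : G) :
    f (fun _ => x * y) = f (fun _ => x) + f (fun _ => y) := by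
  have E := congrFun hf ![x, y]
  rw [d1_xy] at E
  simp only [Pi.zero_apply] at E
  have key : f (fun _ => x * y) - (f (fun _ => x) + f (fun _ => y)) =
      -(f (fun _ => y) - f (fun _ => x * y) + f (fun _ => x)) := by abel
  rw [E, neg_zero, sub_eq_zero] at key
  exact key

end GCoh

theorem isClosed_zero_Q2Z2 : IsClosed ({0} : Set Q2Z2) := by
  have hcl : IsClosed (((PadicInt.Coe.ringHom (p := 2)).toAddMonoidHom.range : AddSubgroup ℚ_[2]) : Set ℚ_[2]) := by
    have heq : (((PadicInt.Coe.ringHom (p := 2)).toAddMonoidHom.range : AddSubgroup ℚ_[2]) : Set ℚ_[2]) = {x : ℚ_[2] | ‖x‖ ≤ 1} := by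
      ext x
      constructor
      · rintro ⟨y, rfl⟩
        exact y.2
      · intro hx
        exact ⟨⟨x, hx⟩, rfl⟩
    rw [heq]
    exact isClosed_le continuous_norm continuous_const
  rw [← (QuotientAddGroup.isQuotientMap_mk _).isClosed_preimage]
  have heq : ((QuotientAddGroup.mk : ℚ_[2] → Q2Z2) ⁻¹' ({0} : Set Q2Z2)) = (((PadicInt.Coe.ringHom (p := 2)).toAddMonoidHom.range : AddSubgroup ℚ_[2]) : Set ℚ_[2]) := by
    ext x
    exact QuotientAddGroup.eq_zero_iff x
  rw [heq]
  exact hcl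

theorem homVanish {G : Type*} [Group G] [TopologicalSpace G]
    (hGinv : closure ((Subgroup.closure {g : G | g ^ 2 = 1} : Subgroup G) : Set G) = Set.univ)
    (φ : G → Q2Z2) (hcont : Continuous φ) (hadd : ∀ x y, φ (x * y) = φ x + φ y)
    (hinv : ∀ g : G, g ^ 2 = 1 → φ g = 0) : ∀ x, φ x = 0 := by
  have h1 : φ 1 = 0 := by
    have h11 := hadd 1 1; rw [one_mul] at h11
    exact (left_eq_add.mp h11)
  let K : Subgroup G :=
    { carrier := {x | φ x = 0}
      one_mem' := h1
      mul_mem' := fun {a b} ha hb => by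
        simp only [Set.mem_setOf_eq] at *; rw [hadd, ha, hb, add_zero]
      inv_mem' := fun {a} ha => by
        simp only [Set.mem_setOf_eq] at *
        have hi := hadd a⁻¹ a; rw [inv_mul_cancel, h1, ha, add_zero] at hi
        exact hi.symm }
  have hKclosed : IsClosed (K : Set G) := isClosed_zero_Q2Z2.preimage hcont
  have hle : (Subgroup.closure {g : G | g ^ 2 = 1} : Subgroup G) ≤ K :=
    Subgroup.closure_le K |>.mpr (fun g hg => hinv g hg)
  have hsub : (Set.univ : Set G) ⊆ (K : Set G) := by
    rw [← hGinv]
    exact closure_minimal hle hKclosed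
  exact fun x => hsub (Set.mem_univ x)

theorem zmod2_two_zsmul (z : ZMod 2) : (2 : ℤ) • z = 0 := by
  rw [two_zsmul]
  revert z; decide

theorem connecting_iso_of_involutions
    (G : Type) [Group G] [TopologicalSpace G]
    (hG : IsProP 2 G) (hGinv : GeneratedByInvolutions G)
    (hH2 : ∀ f : (Fin 2 → G) → Q2Z2, IsCocycle 2 f → IsCoboundary 2 f) :
    -- the connecting map δ : H¹(G,ℚ₂/ℤ₂) → H²(G,ℤ/2ℤ) is injective:
    -- if a lift `h` of a 1-cocycle `f` along multiplication by 2 has `d h = ι ∘ c`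
    -- with `c` a coboundary, then `f` is a coboundary
    ((∀ f : (Fin 1 → G) → Q2Z2, IsCocycle 1 f →
        ∀ h : (Fin 1 → G) → Q2Z2, Continuous h → (∀ v, (2 : ℤ) • h v = f v) →
        ∀ c : (Fin 2 → G) → ZMod 2, (∀ v, iota (c v) = d 1 h v) →
        IsCoboundary 2 c → IsCoboundary 1 f) ∧
    -- δ is surjective: every 2-cocycle with ℤ/2ℤ-coefficients is, modulo
    -- coboundaries, of the form `d h` for a continuous lift `h` of a 1-cocycle `f`
    (∀ c : (Fin 2 → G) → ZMod 2, IsCocycle 2 c →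
        ∃ f h : (Fin 1 → G) → Q2Z2, IsCocycle 1 f ∧ Continuous h ∧
          (∀ v, (2 : ℤ) • h v = f v) ∧
          ∃ b : (Fin 1 → G) → ZMod 2, Continuous b ∧
            (fun v => iota (c v - d 1 b v)) = d 1 h)) ∧
    -- multiplication by 2 is zero on H¹(G,ℚ₂/ℤ₂)
    (∀ f : (Fin 1 → G) → Q2Z2, IsCocycle 1 f →
        IsCoboundary 1 (fun v => (2 : ℤ) • f v)) := by
  refine ⟨⟨?_, ?_⟩, ?_⟩
  · -- injectivity
    intro f hf h hhcont h2 c hc hcb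
    obtain ⟨b, hbcont, hdb⟩ := hcb
    have key : ∀ x y : G, (h (fun _ => x * y) - iota (b (fun _ => x * y))) =
        (h (fun _ => x) - iota (b (fun _ => x))) + (h (fun _ => y) - iota (b (fun _ => y))) := by
      intro x y
      have E : d 1 h ![x, y] = iota (d 1 b ![x, y]) := by
        rw [hdb]; exact (hc ![x, y]).symm
      rw [d1_xy, d1_xy, map_add, map_sub] at E
      have key2 : (h (fun _ => x * y) - iota (b (fun _ => x * y))) -
          ((h (fun _ => x) - iota (b (fun _ => x))) + (h (fun _ => y) - iota (b (fun _ => y)))) =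
          -((h (fun _ => y) - h (fun _ => x * y) + h (fun _ => x)) -
            (iota (b (fun _ => y)) - iota (b (fun _ => x * y)) + iota (b (fun _ => x)))) := by
        abel
      rw [E, sub_self, neg_zero, sub_eq_zero] at key2
      exact key2
    have hpsi1 : (h (fun _ => (1 : G)) - iota (b (fun _ => (1 : G)))) = 0 := by
      have h11 := key 1 1; rw [one_mul] at h11
      exact (left_eq_add.mp h11)
    have hfinv : ∀ g : G, g ^ 2 = 1 → f (fun _ => g) = 0 := by
      intro g hg
      have hfg : f (fun _ => g) = (2 : ℤ) • (h (fun _ => g) - iota (b (fun _ => g))) := by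
        rw [← h2 (fun _ => g), zsmul_sub, ← map_zsmul iota, zmod2_two_zsmul, map_zero, sub_zero]
      rw [hfg, two_zsmul, ← key g g, show g * g = 1 from by rw [← pow_two, hg]]
      exact hpsi1
    have hzero := homVanish hGinv (fun x => f (fun _ => x))
      (hf.1.comp (continuous_pi fun _ => continuous_id)) (cocycle_add f hf.2) hfinv
    exact ⟨0, continuous_const, by
      rw [d_zero']
      funext v
      have hv : v = fun _ => v 0 := funext fun i => by fin_cases i; rfl
      rw [Pi.zero_apply, hv]
      exact (hzero (v 0)).symm⟩
  · -- surjectivity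
    intro c hc
    have hcoc : IsCocycle 2 (fun v => iota (c v)) := by
      constructor
      · exact Continuous.comp continuous_of_discreteTopology hc.1
      · rw [d_hom', hc.2]
        funext v
        simp
    obtain ⟨h, hhcont, hdh⟩ := hH2 _ hcoc
    refine ⟨fun v => (2 : ℤ) • h v, h, ⟨?_, ?_⟩, hhcont, fun v => rfl, 0, continuous_const, ?_⟩
    · have he : (fun v : Fin 1 → G => (2 : ℤ) • h v) = fun v => h v + h v :=
        funext fun v => two_zsmul _
      rw [he]
      exact hhcont.add hhcont
    · rw [d_smul', hdh]
      funext v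
      simp only [Pi.zero_apply]
      rw [← map_zsmul iota, zmod2_two_zsmul, map_zero]
    · rw [d_zero']
      simp only [Pi.zero_apply, sub_zero]
      exact hdh.symm
  · -- multiplication by 2 is zero on H¹
    intro f hf
    have hphicont : Continuous (fun x : G => f (fun _ => x)) :=
      hf.1.comp (continuous_pi fun _ => continuous_id)
    have hf1 : f (fun _ => (1 : G)) = 0 := by
      have h11 := cocycle_add f hf.2 1 1; rw [one_mul] at h11
      exact (left_eq_add.mp h11)
    have hzero := homVanish hGinv (fun x => (2 : ℤ) • f (fun _ => x))
      (by
        have he : (fun x : G => (2 : ℤ) • f (fun _ => x)) =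
            fun x => f (fun _ => x) + f (fun _ => x) := funext fun x => two_zsmul _
        rw [he]
        exact hphicont.add hphicont)
      (fun x y => by
        show (2 : ℤ) • f (fun _ => x * y) = (2 : ℤ) • f (fun _ => x) + (2 : ℤ) • f (fun _ => y)
        rw [cocycle_add f hf.2, zsmul_add])
      (fun g hg => by
        show (2 : ℤ) • f (fun _ => g) = 0
        rw [two_zsmul, ← cocycle_add f hf.2, show g * g = 1 from by rw [← pow_two, hg], hf1])
    exact ⟨0, continuous_const, by
      rw [d_zero']
      funext v
      have hv : v = fun _ => v 0 := funext fun i => by fin_cases i; rfl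
      rw [Pi.zero_apply, hv]
      exact (hzero (v 0)).symm⟩
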